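/- Let θ ∈ ℝ and N ≥ 1 an integer, and suppose ‖θ − a/q‖ < 1/(qN) for coprime integers 0 ≤ a < q ≤ N, where ‖·‖ denotes distance to the nearest integer. Then for any real β, ∑_{|m| ≤ N} min(N², ‖mθ + β‖^{-2}) ≤ C · N³ / (q(1 + N‖θ − a/q‖^{1/2})²) for an absolute constant C. -/

import Mathlib

/-- Distance from a real number to the nearest integer. -/
noncomputable def distInt (x : ℝ) : ℝ := |x - round x|

lemma distInt_nonneg (x : ℝ) : 0 ≤ distInt x := abs_nonneg _

lemma distInt_le (x : ℝ) (n : ℤ) : distInt x ≤ |x - n| := by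
  by_cases h : n = round x
  · simp [distInt, h]
  · have h1 : (1 : ℝ) ≤ |(round x : ℝ) - n| := by
      have : round x - n ≠ 0 := sub_ne_zero.2 (fun hc => h hc.symm)
      have := Int.one_le_abs this
      calc (1:ℝ) ≤ |(round x - n : ℤ)| := by exact_mod_cast this
        _ = |(round x : ℝ) - n| := by push_cast; ring_nf
    have h2 : |x - round x| ≤ 1/2 := abs_sub_round x
    have h3 : |(round x : ℝ) - n| ≤ |x - round x| + |x - n| := by
      have := abs_sub_abs_le_abs_sub ((round x : ℝ) - n) 0
      calc |(round x : ℝ) - n| = |(x - n) - (x - round x)| := by ring_nf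
        _ ≤ |x - n| + |x - round x| := abs_sub _ _
        _ = |x - round x| + |x - n| := by ring
    unfold distInt
    linarith

lemma distInt_add_int (x : ℝ) (n : ℤ) : distInt (x + n) = distInt x := by
  apply le_antisymm
  · calc distInt (x + n) ≤ |x + n - (round x + n : ℤ)| := distInt_le _ _
      _ = distInt x := by unfold distInt; push_cast; ring_nf
  · calc distInt x ≤ |x - (round (x + n) - n : ℤ)| := distInt_le _ _
      _ = distInt (x + n) := by unfold distInt; push_cast; ring_nf

lemma le_distInt (x : ℝ) (h : |x| ≤ 1/2) : |x| ≤ distInt x := by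
  by_cases h0 : round x = 0
  · simp [distInt, h0]
  · have h1 : (1:ℝ) ≤ |(round x : ℝ)| := by
      have := Int.one_le_abs h0
      exact_mod_cast this
    have : |(round x : ℝ)| ≤ |x| + |x - round x| := by
      calc |(round x : ℝ)| = |x - (x - round x)| := by ring_nf
        _ ≤ |x| + |x - round x| := abs_sub _ _
    unfold distInt; linarith

lemma distInt_lipschitz (x y : ℝ) : distInt x ≤ distInt y + |x - y| := by
  calc distInt x ≤ |x - round y| := distInt_le _ _
    _ = |(y - round y) + (x - y)| := by ring_nf
    _ ≤ |y - round y| + |x - y| := abs_add_le _ _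
    _ = distInt y + |x - y| := rfl

-- telescoping sum bound
lemma tel_sum (M : ℕ) (h A : ℝ) (hh : 0 < h) (hA : 0 < A) :
    ∑ i ∈ Finset.range M, ((i : ℝ) * h + A)⁻¹ ^ 2 ≤ A⁻¹ ^ 2 + 1 / (h * A) := by
  cases M with
  | zero => simp; positivity
  | succ M =>
    rw [Finset.sum_range_succ']
    simp only [Nat.cast_zero, zero_mul, zero_add]
    have key : ∑ i ∈ Finset.range M, (((i:ℝ)+1) * h + A)⁻¹ ^ 2 ≤ 1 / (h * A) := by
      set f : ℕ → ℝ := fun i => ((i:ℝ) * h + A)⁻¹ with hf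
      have hfpos : ∀ i : ℕ, 0 < (i:ℝ) * h + A := by
        intro i; positivity
      have step : ∀ i ∈ Finset.range M, (((i:ℝ)+1) * h + A)⁻¹ ^ 2 ≤
          (1/h) * (f i - f (i+1)) := by
        intro i _
        have p1 := hfpos i
        have p2 := hfpos (i+1)
        push_cast at p2
        have e : (1/h) * (f i - f (i+1)) = (((i:ℝ)*h+A) * (((i:ℝ)+1)*h+A))⁻¹ := by
          rw [hf]; push_cast
          field_simp
          ring
        rw [e, pow_two, ← mul_inv]
        apply inv_anti₀ (by positivity)
        nlinarith
      calc ∑ i ∈ Finset.range M, (((i:ℝ)+1) * h + A)⁻¹ ^ 2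
          ≤ ∑ i ∈ Finset.range M, (1/h) * (f i - f (i+1)) := Finset.sum_le_sum step
        _ = (1/h) * (f 0 - f M) := by rw [← Finset.mul_sum, Finset.sum_range_sub']
        _ ≤ (1/h) * (1/A) := by
            apply mul_le_mul_of_nonneg_left _ (by positivity)
            have : 0 ≤ f M := le_of_lt (inv_pos.2 (by positivity))
            simp only [hf, Nat.cast_zero, zero_mul, zero_add]
            rw [one_div]
            linarith
        _ = 1 / (h * A) := by rw [one_div_mul_one_div]
    push_cast
    linarith [key]

-- Basel-type bound over a finset of integers >= 2
lemma basel_sum (s : Finset ℤ) (hs : ∀ k ∈ s, 2 ≤ k) :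
    ∑ k ∈ s, ((k:ℝ)⁻¹) ^ 2 ≤ 1 := by
  classical
  set e : ℤ → ℕ := fun k => (k - 2).toNat with he
  have hinj : Set.InjOn e s := by
    intro k1 h1 k2 h2 hk
    have b1 := hs k1 h1; have b2 := hs k2 h2
    simp only [he] at hk
    omega
  obtain ⟨M, hM⟩ := (s.image e).exists_nat_subset_range
  have g_eq : ∀ k ∈ s, ((k:ℝ)⁻¹) ^ 2 = (((e k : ℝ)) * 1 + 2)⁻¹ ^ 2 := by
    intro k hk
    have b := hs k hk
    have h2 : ((e k : ℝ)) = (k : ℝ) - 2 := by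
      simp only [he]
      have h3 : ((k-2).toNat : ℤ) = k - 2 := Int.toNat_of_nonneg (by omega)
      have : (((k-2).toNat : ℤ) : ℝ) = ((k:ℝ) - 2) := by exact_mod_cast h3
      push_cast at this ⊢
      linarith
    rw [h2]; ring_nf
  calc ∑ k ∈ s, ((k:ℝ)⁻¹) ^ 2 = ∑ k ∈ s, (((e k : ℝ)) * 1 + 2)⁻¹ ^ 2 :=
        Finset.sum_congr rfl g_eq
    _ = ∑ i ∈ s.image e, (((i : ℝ)) * 1 + 2)⁻¹ ^ 2 :=
        (Finset.sum_image (f := fun i : ℕ => (((i : ℝ)) * 1 + 2)⁻¹ ^ 2) hinj).symm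
    _ ≤ ∑ i ∈ Finset.range M, (((i : ℝ)) * 1 + 2)⁻¹ ^ 2 := by
        apply Finset.sum_le_sum_of_subset_of_nonneg hM
        intro i _ _; positivity
    _ ≤ (2:ℝ)⁻¹ ^ 2 + 1 / (1 * 2) := tel_sum M 1 2 one_pos two_pos
    _ ≤ 1 := by norm_num

-- cardinality of a set of pairwise q-congruent integers in [-N, N]
lemma card_fiber_le (N q : ℕ) (hq : 1 ≤ q) (hqN : q ≤ N) (S : Finset ℤ)
    (hsub : S ⊆ Finset.Icc (-(N:ℤ)) N)
    (hdvd : ∀ m ∈ S, ∀ m' ∈ S, (q:ℤ) ∣ m' - m) :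
    (S.card : ℝ) ≤ 6 * N / q := by
  classical
  have hq0 : (0:ℤ) < q := by exact_mod_cast hq
  have hqr : (0:ℝ) < q := by exact_mod_cast hq
  have hNr : (0:ℝ) < N := by exact_mod_cast lt_of_lt_of_le (by exact_mod_cast hq0) hqN
  rcases S.eq_empty_or_nonempty with hS | ⟨m₀, hm₀⟩
  · simp [hS]; positivity
  set t : ℤ := (2*N : ℤ) / q with ht
  have hmodlt : (2*N:ℤ) % q < q := Int.emod_lt_of_pos _ hq0
  have hmodnn : (0:ℤ) ≤ (2*N:ℤ) % q := Int.emod_nonneg _ (ne_of_gt hq0)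
  have e1 : t * q = 2*(N:ℤ) - (2*N) % q := by
    have hdm := Int.mul_ediv_add_emod (2*(N:ℤ)) q
    have : t * q = q * ((2*(N:ℤ)) / q) := by rw [ht]; ring
    rw [this]; linarith
  have htq : t * q ≤ 2*N ∧ 2*(N:ℤ) < t*q + q := by
    constructor
    · linarith
    · linarith
  set e : ℤ → ℤ := fun m => (m - m₀) / q with he
  have hbound : ∀ m ∈ S, -t-1 ≤ e m ∧ e m ≤ t := by
    intro m hm
    have hd := hdvd m₀ hm₀ m hm
    have hmI := Finset.mem_Icc.1 (hsub hm)
    have hm₀I := Finset.mem_Icc.1 (hsub hm₀)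
    constructor
    · rw [he]
      rw [Int.le_ediv_iff_mul_le hq0]
      have hr : (-t-1)*q = -(t*q) - q := by ring
      have : -(2*(N:ℤ)) ≤ m - m₀ := by omega
      linarith
    · rw [he]
      calc (m - m₀)/q ≤ (2*N:ℤ)/q := Int.ediv_le_ediv hq0 (by omega)
        _ = t := rfl
  have hinj : Set.InjOn e S := by
    intro m1 h1 m2 h2 hem
    have d1 := hdvd m₀ hm₀ m1 h1
    have d2 := hdvd m₀ hm₀ m2 h2
    have e1 : e m1 * q = m1 - m₀ := Int.ediv_mul_cancel d1
    have e2 : e m2 * q = m2 - m₀ := Int.ediv_mul_cancel d2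
    rw [hem] at e1
    omega
  have hcard : S.card ≤ (2*t+2).toNat := by
    calc S.card = (S.image e).card := (Finset.card_image_of_injOn hinj).symm
      _ ≤ (Finset.Icc (-t-1) t).card := by
          apply Finset.card_le_card
          intro j hj
          obtain ⟨m, hm, rfl⟩ := Finset.mem_image.1 hj
          exact Finset.mem_Icc.2 (hbound m hm)
      _ = (2*t+2).toNat := by rw [Int.card_Icc]; congr 1; ring
  have ht0 : 0 ≤ t := Int.ediv_nonneg (by positivity) (le_of_lt hq0)
  have htR : (t:ℝ) * q ≤ 2*N := by exact_mod_cast htq.1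
  have htR2 : (t:ℝ) ≤ 2*N/q := by rw [le_div_iff₀ hqr]; exact htR
  have hcardR : (S.card : ℝ) ≤ 2*(t:ℝ)+2 := by
    have : ((2*t+2).toNat : ℝ) = 2*(t:ℝ)+2 := by
      have : ((2*t+2).toNat : ℤ) = 2*t+2 := Int.toNat_of_nonneg (by omega)
      exact_mod_cast this
    rw [← this]; exact_mod_cast hcard
  have h2 : (2:ℝ) ≤ 2*N/q := by
    rw [le_div_iff₀ hqr]
    have : (q:ℝ) ≤ N := by exact_mod_cast hqN
    linarith
  calc (S.card : ℝ) ≤ 2*(t:ℝ)+2 := hcardR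
    _ ≤ 2*(2*N/q) + 2*N/q := by linarith
    _ = 6*N/q := by ring

-- one-sided progression sum
lemma side_sum (Nr h : ℝ) (hNr : 0 < Nr) (hh : 0 < h) (P : Finset ℤ) (j₀ : ℤ)
    (v : ℤ → ℝ) (hv : ∀ j ∈ P, ((j - j₀ : ℤ):ℝ) * h + Nr⁻¹ ≤ v j)
    (hlow : ∀ j ∈ P, j₀ ≤ j) :
    ∑ j ∈ P, (v j)⁻¹ ^ 2 ≤ Nr^2 + Nr / h := by
  classical
  set e : ℤ → ℕ := fun j => (j - j₀).toNat with he
  set g : ℕ → ℝ := fun i => ((i:ℝ) * h + Nr⁻¹)⁻¹ ^ 2 with hg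
  have hstep : ∀ j ∈ P, (v j)⁻¹ ^ 2 ≤ g (e j) := by
    intro j hj
    have h1 : ((e j : ℕ) : ℝ) = ((j - j₀ : ℤ) : ℝ) := by
      have : ((j - j₀).toNat : ℤ) = j - j₀ := Int.toNat_of_nonneg (by
        have := hlow j hj; omega)
      exact_mod_cast this
    have h2 : (0:ℝ) < ((j - j₀ : ℤ):ℝ) * h + Nr⁻¹ := by
      have : (0:ℝ) ≤ ((j - j₀ : ℤ):ℝ) := by
        have := hlow j hj
        exact_mod_cast Int.sub_nonneg.2 this
      positivity
    rw [hg]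
    simp only [h1]
    have hle : (v j)⁻¹ ≤ (((j - j₀:ℤ):ℝ) * h + Nr⁻¹)⁻¹ := inv_anti₀ h2 (hv j hj)
    have hvnn : 0 ≤ (v j)⁻¹ := by
      have : 0 < v j := lt_of_lt_of_le h2 (hv j hj)
      positivity
    exact pow_le_pow_left₀ hvnn hle 2
  have hinj : Set.InjOn e P := by
    intro j1 h1 j2 h2 hej
    have b1 := hlow j1 h1; have b2 := hlow j2 h2
    simp only [he] at hej
    omega
  obtain ⟨M, hM⟩ := (P.image e).exists_nat_subset_range
  calc ∑ j ∈ P, (v j)⁻¹ ^ 2 ≤ ∑ j ∈ P, g (e j) := Finset.sum_le_sum hstep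
    _ = ∑ i ∈ P.image e, g i := (Finset.sum_image (f := g) hinj).symm
    _ ≤ ∑ i ∈ Finset.range M, g i := by
        apply Finset.sum_le_sum_of_subset_of_nonneg hM
        intro i _ _
        rw [hg]; positivity
    _ ≤ (Nr⁻¹)⁻¹ ^ 2 + 1 / (h * Nr⁻¹) := tel_sum M h Nr⁻¹ hh (by positivity)
    _ = Nr^2 + Nr / h := by
        rw [inv_inv]
        congr 1
        field_simp

lemma prog_half (Nr h w : ℝ) (hNr : 0 < Nr) (hh : 0 < h) (P : Finset ℤ)
    (hP : ∀ j ∈ P, Nr⁻¹ ≤ (j:ℝ)*h - w) :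
    ∑ j ∈ P, (max |(j:ℝ)*h - w| (Nr⁻¹))⁻¹ ^ 2 ≤ Nr^2 + Nr/h := by
  have hA : (0:ℝ) < Nr⁻¹ := by positivity
  set j₀ : ℤ := ⌈(w + Nr⁻¹)/h⌉ with hj₀
  have hceil : (w + Nr⁻¹)/h ≤ (j₀:ℝ) := Int.le_ceil _
  have hj₀h : w + Nr⁻¹ ≤ (j₀:ℝ) * h := by
    rw [div_le_iff₀ hh] at hceil; linarith
  apply side_sum Nr h hNr hh P j₀
  · intro j hj
    have h2 := hP j hj
    have habs : |(j:ℝ)*h - w| = (j:ℝ)*h - w := abs_of_pos (lt_of_lt_of_le hA h2)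
    have : ((j - j₀ : ℤ):ℝ) * h + Nr⁻¹ ≤ (j:ℝ)*h - w := by
      push_cast
      nlinarith
    calc ((j - j₀ : ℤ):ℝ) * h + Nr⁻¹ ≤ (j:ℝ)*h - w := this
      _ = |(j:ℝ)*h - w| := habs.symm
      _ ≤ max |(j:ℝ)*h - w| (Nr⁻¹) := le_max_left _ _
  · intro j hj
    have h2 := hP j hj
    rw [hj₀]
    apply Int.ceil_le.2
    rw [div_le_iff₀ hh]
    linarith

lemma prog_sum (N : ℕ) (hN : 1 ≤ N) (h w : ℝ) (hh : 0 < h) (J : Finset ℤ) :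
    ∑ j ∈ J, (max |(j:ℝ) * h - w| ((N:ℝ)⁻¹))⁻¹ ^ 2 ≤ 3 * (N:ℝ)^2 + 4 * (N:ℝ) / h := by
  classical
  set Nr : ℝ := (N:ℝ) with hNrdef
  have hNr : (0:ℝ) < Nr := by rw [hNrdef]; exact_mod_cast hN
  have hA : (0:ℝ) < Nr⁻¹ := by positivity
  set F : ℤ → ℝ := fun j => (max |(j:ℝ) * h - w| (Nr⁻¹))⁻¹ ^ 2 with hF
  have hFnn : ∀ j : ℤ, 0 ≤ F j := by
    intro j; rw [hF]; positivity
  have hFle : ∀ j : ℤ, F j ≤ Nr^2 := by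
    intro j
    rw [hF]
    have h1 : Nr⁻¹ ≤ max |(j:ℝ) * h - w| (Nr⁻¹) := le_max_right _ _
    have h2 : (max |(j:ℝ) * h - w| (Nr⁻¹))⁻¹ ≤ Nr := by
      have := inv_anti₀ hA h1
      rwa [inv_inv] at this
    exact pow_le_pow_left₀ (by positivity) h2 2
  set P0 : ℤ → Prop := fun j => |(j:ℝ)*h - w| < Nr⁻¹ with hP0
  set Pp : ℤ → Prop := fun j => Nr⁻¹ ≤ (j:ℝ)*h - w with hPp
  have hsplit : ∑ j ∈ J, F j =
      ∑ j ∈ J.filter P0, F j + (∑ j ∈ (J.filter (¬ P0 ·)).filter Pp, F j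
        + ∑ j ∈ (J.filter (¬ P0 ·)).filter (¬ Pp ·), F j) := by
    rw [Finset.sum_filter_add_sum_filter_not, Finset.sum_filter_add_sum_filter_not]
  -- bound on J0
  have hJ0 : ∑ j ∈ J.filter P0, F j ≤ 2*Nr/h + Nr^2 := by
    set lo : ℤ := ⌈(w - Nr⁻¹)/h⌉ with hlo
    set hi : ℤ := ⌊(w + Nr⁻¹)/h⌋ with hhi
    have hsub : J.filter P0 ⊆ Finset.Icc lo hi := by
      intro j hj
      have hj' := (Finset.mem_filter.1 hj).2
      rw [hP0, abs_lt] at hj'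
      rw [Finset.mem_Icc]
      constructor
      · rw [hlo]
        apply Int.ceil_le.2
        rw [div_le_iff₀ hh]
        linarith [hj'.1]
      · rw [hhi]
        apply Int.le_floor.2
        rw [le_div_iff₀ hh]
        linarith [hj'.2]
    have hcard : ((J.filter P0).card : ℝ) ≤ 2*Nr⁻¹/h + 1 := by
      by_cases hlohi : lo ≤ hi
      · have h1 : (J.filter P0).card ≤ (Finset.Icc lo hi).card := Finset.card_le_card hsub
        have h2 : (Finset.Icc lo hi).card = (hi + 1 - lo).toNat := Int.card_Icc _ _
        have h3 : ((hi + 1 - lo).toNat : ℝ) = ((hi:ℝ) + 1 - lo) := by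
          have : ((hi + 1 - lo).toNat : ℤ) = hi + 1 - lo := Int.toNat_of_nonneg (by omega)
          exact_mod_cast this
        have h4 : ((J.filter P0).card : ℝ) ≤ (hi:ℝ) + 1 - lo := by
          rw [← h3]; exact_mod_cast h1.trans_eq h2
        have h5 : (hi:ℝ) ≤ (w + Nr⁻¹)/h := Int.floor_le _
        have h6 : (w - Nr⁻¹)/h ≤ (lo:ℝ) := Int.le_ceil _
        have h7 : (w + Nr⁻¹)/h - (w - Nr⁻¹)/h = 2*Nr⁻¹/h := by ring
        linarith
      · have : J.filter P0 = ∅ := by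
          rw [← Finset.subset_empty]
          intro j hj
          exact absurd (Finset.mem_Icc.1 (hsub hj)) (by omega)
        rw [this]
        simp
        positivity
    calc ∑ j ∈ J.filter P0, F j ≤ (J.filter P0).card • Nr^2 :=
          Finset.sum_le_card_nsmul _ _ _ (fun j _ => hFle j)
      _ = ((J.filter P0).card : ℝ) * Nr^2 := by rw [nsmul_eq_mul]
      _ ≤ (2*Nr⁻¹/h + 1) * Nr^2 := by
          apply mul_le_mul_of_nonneg_right hcard (by positivity)
      _ = 2*Nr/h * (Nr⁻¹ * Nr) + Nr^2 := by ring
      _ = 2*Nr/h + Nr^2 := by rw [inv_mul_cancel₀ (ne_of_gt hNr), mul_one]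
  -- bound on P side
  have hJP : ∑ j ∈ (J.filter (¬ P0 ·)).filter Pp, F j ≤ Nr^2 + Nr/h := by
    apply prog_half Nr h w hNr hh
    intro j hj
    exact (Finset.mem_filter.1 hj).2
  -- bound on M side
  have hJM : ∑ j ∈ (J.filter (¬ P0 ·)).filter (¬ Pp ·), F j ≤ Nr^2 + Nr/h := by
    set Mm := (J.filter (¬ P0 ·)).filter (¬ Pp ·) with hMm
    have hMneg : ∀ j ∈ Mm, Nr⁻¹ ≤ w - (j:ℝ)*h := by
      intro j hj
      rw [hMm, Finset.mem_filter] at hj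
      have h1 := hj.2
      have h2 := (Finset.mem_filter.1 hj.1).2
      rw [hPp] at h1
      rw [hP0] at h2
      push_neg at h1 h2
      rcases abs_cases ((j:ℝ)*h - w) with ⟨he, _⟩ | ⟨he, _⟩ <;> rw [he] at h2 <;> linarith
    have hsum : ∑ j ∈ Mm, F j =
        ∑ i ∈ Mm.image (fun j => -j), (max |(i:ℝ)*h - (-w)| (Nr⁻¹))⁻¹ ^ 2 := by
      rw [Finset.sum_image (by intro a _ b _ hab; exact neg_injective hab)]
      apply Finset.sum_congr rfl
      intro j _
      rw [hF]
      congr 2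
      push_cast
      rw [← abs_neg]
      ring_nf
    rw [hsum]
    apply prog_half Nr h (-w) hNr hh
    intro i hi
    obtain ⟨j, hj, rfl⟩ := Finset.mem_image.1 hi
    have := hMneg j hj
    push_cast
    linarith
  rw [hsplit]
  have e : (3:ℝ) * Nr^2 + 4*Nr/h = (2*Nr/h + Nr^2) + ((Nr^2 + Nr/h) + (Nr^2 + Nr/h)) := by ring
  rw [e]
  exact add_le_add hJ0 (add_le_add hJP hJM)

lemma near_fiber (N q : ℕ) (hN : 1 ≤ N) (hq : 1 ≤ q)
    (θ ε β : ℝ) (z : ℤ) (hqθ : (q:ℝ)*θ = (z:ℝ) + (q:ℝ)*ε)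
    (hε0 : ε ≠ 0) (hεsmall : (N:ℝ)*|ε| ≤ 1)
    (S : Finset ℤ) (hsub : S ⊆ Finset.Icc (-(N:ℤ)) N)
    (hdvd : ∀ m ∈ S, ∀ m' ∈ S, (q:ℤ) ∣ m' - m) :
    ∑ m ∈ S, (max (distInt ((m:ℝ)*θ + β)) ((N:ℝ)⁻¹))⁻¹ ^ 2
      ≤ 21*(N:ℝ)^2 + 28*(N:ℝ)/((q:ℝ)*|ε|) := by
  classical
  have hNr : (0:ℝ) < N := by exact_mod_cast hN
  have hqr : (0:ℝ) < q := by exact_mod_cast hq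
  have hεabs : (0:ℝ) < |ε| := abs_pos.2 hε0
  rcases S.eq_empty_or_nonempty with hS | ⟨m₀, hm₀⟩
  · rw [hS]; simp; positivity
  set y : ℝ := (m₀:ℝ)*θ + β with hy
  set j : ℤ → ℤ := fun m => (m - m₀) / q with hj
  have hjq : ∀ m ∈ S, (q:ℤ) * j m = m - m₀ := by
    intro m hm
    exact Int.mul_ediv_cancel' (hdvd m₀ hm₀ m hm)
  have hjr : ∀ m ∈ S, (j m : ℝ) * ((q:ℝ)*ε) = ((m:ℝ) - (m₀:ℝ))*ε := by
    intro m hm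
    have := hjq m hm
    have hc : (q:ℝ) * (j m : ℝ) = (m:ℝ) - (m₀:ℝ) := by exact_mod_cast this
    rw [show (j m:ℝ) * ((q:ℝ)*ε) = ((q:ℝ) * (j m:ℝ)) * ε by ring, hc]
  have hid : ∀ m ∈ S, distInt ((m:ℝ)*θ + β) = distInt (y + (j m:ℝ)*((q:ℝ)*ε)) := by
    intro m hm
    have h1 : (m:ℝ)*θ + β = (y + (j m:ℝ)*((q:ℝ)*ε)) + ((j m * z : ℤ):ℝ) := by
      rw [hjr m hm, hy]
      have hq0 : (q:ℝ) ≠ 0 := ne_of_gt hqr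
      have hθ : θ = (z:ℝ)/q + ε := by field_simp at hqθ ⊢; linarith
      have hc : (q:ℝ) * (j m : ℝ) = (m:ℝ) - (m₀:ℝ) := by exact_mod_cast hjq m hm
      push_cast
      rw [hθ]
      field_simp
      linear_combination (-(z:ℝ)) * hc
    rw [h1, distInt_add_int]
  -- window for rounds
  set n : ℤ → ℤ := fun m => round (y + (j m:ℝ)*((q:ℝ)*ε)) with hn
  set e : ℤ → ℤ := fun m => n m - round y with he
  have hwin : ∀ m ∈ S, e m ∈ Finset.Icc (-3:ℤ) 3 := by
    intro m hm
    have hm' := Finset.mem_Icc.1 (hsub hm)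
    have hm₀' := Finset.mem_Icc.1 (hsub hm₀)
    have h1 : |(j m:ℝ)*((q:ℝ)*ε)| ≤ 2 := by
      rw [hjr m hm, abs_mul]
      have h2 : |(m:ℝ) - (m₀:ℝ)| ≤ 2*N := by
        rw [abs_le]
        constructor <;> [push_cast; push_cast] <;>
          [exact_mod_cast (by omega : -(2*(N:ℤ)) ≤ m - m₀); exact_mod_cast (by omega : m - m₀ ≤ 2*(N:ℤ))]
      calc |(m:ℝ) - (m₀:ℝ)| * |ε| ≤ 2*N * |ε| := by
            apply mul_le_mul_of_nonneg_right h2 (abs_nonneg _)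
        _ = 2 * ((N:ℝ) * |ε|) := by ring
        _ ≤ 2 := by linarith
    have h2 : |y + (j m:ℝ)*((q:ℝ)*ε) - n m| ≤ 1/2 := abs_sub_round _
    have h3 : |y - round y| ≤ 1/2 := abs_sub_round _
    have h4 : |(n m : ℝ) - (round y : ℝ)| ≤ 3 := by
      have : (n m : ℝ) - (round y : ℝ) =
          -(y + (j m:ℝ)*((q:ℝ)*ε) - n m) + (j m:ℝ)*((q:ℝ)*ε) + (y - round y) := by ring
      rw [this]
      calc _ ≤ |-(y + (j m:ℝ)*((q:ℝ)*ε) - n m) + (j m:ℝ)*((q:ℝ)*ε)| + |y - round y| := abs_add_le _ _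
        _ ≤ |-(y + (j m:ℝ)*((q:ℝ)*ε) - n m)| + |(j m:ℝ)*((q:ℝ)*ε)| + |y - round y| := by
            have := abs_add_le (-(y + (j m:ℝ)*((q:ℝ)*ε) - n m)) ((j m:ℝ)*((q:ℝ)*ε))
            linarith
        _ ≤ 1/2 + 2 + 1/2 := by rw [abs_neg]; linarith
        _ = 3 := by norm_num
    have h5 : |(e m : ℤ)| ≤ 3 := by
      have : ((e m : ℤ):ℝ) = (n m : ℝ) - (round y : ℝ) := by rw [he]; push_cast; ring
      have h6 : |((e m : ℤ):ℝ)| ≤ 3 := this ▸ h4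
      exact_mod_cast (by rwa [← Int.cast_abs] at h6 : ((|e m| : ℤ):ℝ) ≤ 3)
    exact Finset.mem_Icc.2 (by exact_mod_cast abs_le.mp h5)
  rw [← Finset.sum_fiberwise_of_maps_to hwin]
  have hfib : ∀ ee ∈ Finset.Icc (-3:ℤ) 3,
      ∑ m ∈ S.filter (fun m => e m = ee), (max (distInt ((m:ℝ)*θ + β)) ((N:ℝ)⁻¹))⁻¹ ^ 2
        ≤ 3*(N:ℝ)^2 + 4*(N:ℝ)/((q:ℝ)*|ε|) := by
    intro ee _
    set σ : ℤ := if 0 ≤ ε then 1 else -1 with hσ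
    have hσε : (σ:ℝ) * |ε| = ε := by
      rw [hσ]
      by_cases hc : 0 ≤ ε
      · simp [hc, abs_of_nonneg hc]
      · push_neg at hc
        simp [hc.not_ge, abs_of_neg hc]
    have hσ0 : σ ≠ 0 := by rw [hσ]; split <;> omega
    set w : ℝ := ((round y + ee : ℤ):ℝ) - y with hw
    set ρ : ℤ → ℤ := fun m => σ * j m with hρ
    set G : ℤ → ℝ := fun i => (max |(i:ℝ) * ((q:ℝ)*|ε|) - w| ((N:ℝ)⁻¹))⁻¹ ^ 2 with hG
    have hptv : ∀ m ∈ S.filter (fun m => e m = ee),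
        (max (distInt ((m:ℝ)*θ + β)) ((N:ℝ)⁻¹))⁻¹ ^ 2 = G (ρ m) := by
      intro m hm
      obtain ⟨hmS, hme⟩ := Finset.mem_filter.1 hm
      rw [hid m hmS, hG]
      simp only
      have hnm : n m = round y + ee := by rw [← hme, he]; ring
      have hd : distInt (y + (j m:ℝ)*((q:ℝ)*ε)) = |((ρ m : ℤ):ℝ) * ((q:ℝ)*|ε|) - w| := by
        have h0 : distInt (y + (j m:ℝ)*((q:ℝ)*ε)) = |y + (j m:ℝ)*((q:ℝ)*ε) - (n m:ℝ)| := rfl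
        rw [h0, hnm, hw]
        rw [show ((ρ m : ℤ):ℝ) = (σ:ℝ) * (j m:ℝ) by rw [hρ]; push_cast; ring]
        rw [show (σ:ℝ) * (j m:ℝ) * ((q:ℝ)*|ε|) = (j m:ℝ) * ((q:ℝ) * ((σ:ℝ) * |ε|)) by ring]
        rw [hσε]
        congr 1
        push_cast
        ring
      rw [hd]
    rw [Finset.sum_congr rfl hptv]
    have hinj : Set.InjOn ρ (S.filter (fun m => e m = ee)) := by
      intro m1 h1 m2 h2 hρm
      obtain ⟨h1S, _⟩ := Finset.mem_filter.1 h1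
      obtain ⟨h2S, _⟩ := Finset.mem_filter.1 h2
      rw [hρ] at hρm
      simp only at hρm
      have hj12 : j m1 = j m2 := mul_left_cancel₀ hσ0 hρm
      have e1 := hjq m1 h1S
      have e2 := hjq m2 h2S
      rw [hj12] at e1
      linarith
    rw [show (∑ m ∈ S.filter (fun m => e m = ee), G (ρ m)) =
        ∑ i ∈ (S.filter (fun m => e m = ee)).image ρ, G i from (Finset.sum_image (f := G) hinj).symm]
    exact prog_sum N hN ((q:ℝ)*|ε|) w (by positivity) _
  calc ∑ ee ∈ Finset.Icc (-3:ℤ) 3, ∑ m ∈ S.filter (fun m => e m = ee),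
        (max (distInt ((m:ℝ)*θ + β)) ((N:ℝ)⁻¹))⁻¹ ^ 2
      ≤ ∑ ee ∈ Finset.Icc (-3:ℤ) 3, (3*(N:ℝ)^2 + 4*(N:ℝ)/((q:ℝ)*|ε|)) :=
        Finset.sum_le_sum hfib
    _ = 7 * (3*(N:ℝ)^2 + 4*(N:ℝ)/((q:ℝ)*|ε|)) := by
        rw [Finset.sum_const]
        have hc7 : (Finset.Icc (-3:ℤ) 3).card = 7 := by rw [Int.card_Icc]; rfl
        rw [hc7, nsmul_eq_mul]
        norm_num
    _ = 21*(N:ℝ)^2 + 28*(N:ℝ)/((q:ℝ)*|ε|) := by ring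

set_option maxHeartbeats 1600000 in
/-- Weyl-type estimate: if `‖θ − a/q‖ < 1/(qN)` with `0 ≤ a < q ≤ N` coprime, then for any
real `β`, `∑_{|m| ≤ N} min(N², ‖mθ + β‖⁻²) ≤ C N³ / (q (1 + N ‖θ − a/q‖^{1/2})²)` for an
absolute constant `C` (the term being `N²` when `mθ + β ∈ ℤ`). -/
theorem stmt_6 :
    ∃ C : ℝ, 0 < C ∧
      ∀ (θ β : ℝ) (N a q : ℕ), 1 ≤ N → Nat.Coprime a q → a < q → q ≤ N →
        distInt (θ - (a : ℝ) / q) < 1 / ((q : ℝ) * N) →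
        ∑ m ∈ Finset.Icc (-(N : ℤ)) (N : ℤ),
            (if distInt ((m : ℝ) * θ + β) = 0 then ((N : ℝ) ^ 2)
              else min ((N : ℝ) ^ 2) ((distInt ((m : ℝ) * θ + β)) ⁻¹ ^ 2))
          ≤ C * (N : ℝ) ^ 3 /
              ((q : ℝ) * (1 + (N : ℝ) * (distInt (θ - (a : ℝ) / q)) ^ ((1 : ℝ) / 2)) ^ 2) := by
  classical
  refine ⟨2000, by norm_num, ?_⟩
  intro θ β N a q hN hcop haq hqN hdio
  have hq1 : 1 ≤ q := by omega
  have hqr : (0:ℝ) < q := by exact_mod_cast hq1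
  have hNr : (0:ℝ) < N := by exact_mod_cast hN
  have hqleN : (q:ℝ) ≤ N := by exact_mod_cast hqN
  set S₀ : ℤ := round (θ - (a:ℝ)/q) with hS₀
  set ε : ℝ := θ - (a:ℝ)/q - (S₀:ℝ) with hεdef
  have hDeq : distInt (θ - (a:ℝ)/q) = |ε| := rfl
  rw [hDeq] at hdio ⊢
  have hD0 : (0:ℝ) ≤ |ε| := abs_nonneg ε
  have hDsmall : (N:ℝ) * |ε| < 1/q := by
    calc (N:ℝ)*|ε| < (N:ℝ) * (1/((q:ℝ)*N)) := by
          exact mul_lt_mul_of_pos_left hdio hNr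
      _ = 1/q := by field_simp
  have hqε : (q:ℝ)*|ε| < 1/N := by
    calc (q:ℝ)*|ε| < (q:ℝ) * (1/((q:ℝ)*N)) := by
          exact mul_lt_mul_of_pos_left hdio hqr
      _ = 1/N := by field_simp
  set b : ℤ := round ((q:ℝ)*β) with hb
  set γ : ℝ := β - (b:ℝ)/q with hγdef
  have hγ : |γ| ≤ 1/(2*q) := by
    have h1 : |(q:ℝ)*β - b| ≤ 1/2 := abs_sub_round _
    have h2 : γ = ((q:ℝ)*β - b)/q := by rw [hγdef]; field_simp
    rw [h2, abs_div, abs_of_pos hqr, div_le_div_iff₀ hqr (by positivity)]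
    calc |(q:ℝ)*β - b| * (2*q) ≤ (1/2) * (2*q) := by
          apply mul_le_mul_of_nonneg_right h1 (by positivity)
      _ = 1 * q := by ring
  have hθ : θ = (a:ℝ)/q + ε + (S₀:ℝ) := by rw [hεdef]; ring
  set ψ : ℤ → ℝ := fun m => (max (distInt ((m:ℝ)*θ + β)) ((N:ℝ)⁻¹))⁻¹ ^ 2 with hψ
  have hψnn : ∀ m : ℤ, 0 ≤ ψ m := by
    intro m; rw [hψ]; simp only
    have h1 : (0:ℝ) < max (distInt ((m:ℝ)*θ + β)) ((N:ℝ)⁻¹) :=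
      lt_of_lt_of_le (by positivity) (le_max_right _ _)
    positivity
  have hψleN : ∀ m : ℤ, ψ m ≤ (N:ℝ)^2 := by
    intro m; rw [hψ]; simp only
    have h1 : (N:ℝ)⁻¹ ≤ max (distInt ((m:ℝ)*θ + β)) ((N:ℝ)⁻¹) := le_max_right _ _
    have h2 : (max (distInt ((m:ℝ)*θ + β)) ((N:ℝ)⁻¹))⁻¹ ≤ (N:ℝ) := by
      have := inv_anti₀ (by positivity) h1
      rwa [inv_inv] at this
    have h3 : (0:ℝ) ≤ (max (distInt ((m:ℝ)*θ + β)) ((N:ℝ)⁻¹))⁻¹ := by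
      have h4 : (0:ℝ) < max (distInt ((m:ℝ)*θ + β)) ((N:ℝ)⁻¹) :=
        lt_of_lt_of_le (by positivity) (le_max_right _ _)
      positivity
    exact pow_le_pow_left₀ h3 h2 2
  -- rewrite summand
  have hterm : ∀ m ∈ Finset.Icc (-(N:ℤ)) (N:ℤ),
      (if distInt ((m:ℝ)*θ + β) = 0 then ((N:ℝ)^2)
        else min ((N:ℝ)^2) ((distInt ((m:ℝ)*θ + β))⁻¹ ^ 2)) = ψ m := by
    intro m _
    have hd0 : 0 ≤ distInt ((m:ℝ)*θ + β) := distInt_nonneg _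
    have hiN : (0:ℝ) < (N:ℝ)⁻¹ := by positivity
    rw [hψ]; simp only
    by_cases h0 : distInt ((m:ℝ)*θ + β) = 0
    · rw [if_pos h0, h0, max_eq_right (le_of_lt hiN), inv_inv]
    · rw [if_neg h0]
      have hdpos : 0 < distInt ((m:ℝ)*θ + β) := lt_of_le_of_ne hd0 (Ne.symm h0)
      by_cases h1 : distInt ((m:ℝ)*θ + β) ≤ (N:ℝ)⁻¹
      · rw [max_eq_right h1, inv_inv]
        apply min_eq_left
        have h2 : (N:ℝ) ≤ (distInt ((m:ℝ)*θ + β))⁻¹ := by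
          have := inv_anti₀ hdpos h1
          rwa [inv_inv] at this
        exact pow_le_pow_left₀ (by positivity) h2 2
      · push_neg at h1
        rw [max_eq_left (le_of_lt h1)]
        apply min_eq_right
        have h2 : (distInt ((m:ℝ)*θ + β))⁻¹ ≤ (N:ℝ) := by
          have := inv_anti₀ hiN (le_of_lt h1)
          rwa [inv_inv] at this
        exact pow_le_pow_left₀ (by positivity) h2 2
  rw [Finset.sum_congr rfl hterm]
  -- residue key
  set key : ℤ → ℤ := fun m => (m*a + b) % q with hkey
  have hq0' : (q:ℤ) ≠ 0 := by omega
  have hq0p : (0:ℤ) < q := by exact_mod_cast hq1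
  have hkey0 : ∀ m : ℤ, 0 ≤ key m := fun m => Int.emod_nonneg _ hq0'
  have hkeyq : ∀ m : ℤ, key m < q := fun m => Int.emod_lt_of_pos _ hq0p
  have hcong : ∀ m m' : ℤ, key m = key m' → (q:ℤ) ∣ m' - m := by
    intro m m' hk
    have h1 : (m*a + b) ≡ (m'*a + b) [ZMOD (q:ℤ)] := hk
    have h2 : (q:ℤ) ∣ (m'*a + b) - (m*a + b) := Int.ModEq.dvd h1
    have h3 : (q:ℤ) ∣ (m' - m) * a := by
      rw [show (m' - m) * (a:ℤ) = (m'*a + b) - (m*a + b) by ring]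
      exact h2
    have hcop' : IsCoprime (q:ℤ) (a:ℤ) := by
      rw [Int.isCoprime_iff_gcd_eq_one, Int.gcd_natCast_natCast]
      exact hcop.symm
    exact hcop'.dvd_of_dvd_mul_right h3
  -- decomposition
  have hdist : ∀ m : ℤ, distInt ((m:ℝ)*θ + β) = distInt (((m*a+b : ℤ):ℝ)/q + (γ + (m:ℝ)*ε)) := by
    intro m
    have h1 : (m:ℝ)*θ + β = (((m*a+b : ℤ):ℝ)/q + (γ + (m:ℝ)*ε)) + ((m*S₀ : ℤ):ℝ) := by
      rw [hθ, hγdef]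
      push_cast
      field_simp
      ring
    rw [h1, distInt_add_int]
  -- lower bound via key
  have hlowkey : ∀ m : ℤ, -(N:ℤ) ≤ m → m ≤ (N:ℤ) →
      ((min (key m) ((q:ℤ) - key m) : ℤ):ℝ)/q - 3/(2*q) ≤ distInt ((m:ℝ)*θ + β) := by
    intro m hm1 hm2
    have hk0 := hkey0 m
    have hkq := hkeyq m
    set kk := key m with hkk
    set dd : ℤ := (m*a+b) / (q:ℤ) with hdd
    have hsplitint : ((m*a+b : ℤ):ℝ)/q = (kk:ℝ)/q + (dd:ℝ) := by
      have hid := Int.mul_ediv_add_emod (m*a+b) (q:ℤ)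
      have h2 : ((m*a+b : ℤ):ℝ) = (q:ℝ) * (dd:ℝ) + (kk:ℝ) := by
        rw [hkk, hkey, hdd]
        exact_mod_cast hid.symm
      rw [h2]
      field_simp
      ring
    have h3 : ((min kk ((q:ℤ) - kk) : ℤ):ℝ)/q ≤ distInt ((kk:ℝ)/q) := by
      by_cases hc : 2*kk ≤ (q:ℤ)
      · have habs : |(kk:ℝ)/q| ≤ 1/2 := by
          rw [abs_of_nonneg (by positivity : (0:ℝ) ≤ (kk:ℝ)/q),
            div_le_div_iff₀ hqr (by norm_num : (0:ℝ) < 2)]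
          have : (kk:ℝ)*2 ≤ (q:ℝ) := by exact_mod_cast (by omega : kk*2 ≤ (q:ℤ))
          linarith
        have h4 := le_distInt _ habs
        have h5 : ((min kk ((q:ℤ) - kk) : ℤ):ℝ) ≤ (kk:ℝ) := by
          exact_mod_cast min_le_left kk ((q:ℤ) - kk)
        calc ((min kk ((q:ℤ) - kk) : ℤ):ℝ)/q ≤ (kk:ℝ)/q := by gcongr
          _ = |(kk:ℝ)/q| := (abs_of_nonneg (by positivity)).symm
          _ ≤ distInt ((kk:ℝ)/q) := h4
      · push_neg at hc
        have heq : (kk:ℝ)/q = (((kk - q : ℤ):ℝ)/q) + ((1:ℤ):ℝ) := by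
          push_cast
          field_simp
          ring
        have habs : |((kk - q:ℤ):ℝ)/q| ≤ 1/2 := by
          rw [abs_div, abs_of_pos hqr]
          have h6 : |((kk - q:ℤ):ℝ)| = ((q - kk:ℤ):ℝ) := by
            rw [abs_of_nonpos (by exact_mod_cast (by omega : kk - (q:ℤ) ≤ 0))]
            push_cast
            ring
          rw [h6, div_le_div_iff₀ hqr (by norm_num : (0:ℝ) < 2)]
          have : ((q - kk:ℤ):ℝ)*2 ≤ (q:ℝ) := by
            exact_mod_cast (by omega : ((q:ℤ) - kk)*2 ≤ (q:ℤ))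
          linarith
        have h4 := le_distInt _ habs
        have h7 : distInt ((kk:ℝ)/q) = distInt (((kk - q:ℤ):ℝ)/q) := by
          rw [heq, distInt_add_int]
        rw [h7]
        have h5 : ((min kk ((q:ℤ) - kk) : ℤ):ℝ) ≤ ((q - kk:ℤ):ℝ) := by
          exact_mod_cast min_le_right kk ((q:ℤ) - kk)
        calc ((min kk ((q:ℤ) - kk) : ℤ):ℝ)/q ≤ ((q - kk:ℤ):ℝ)/q := by gcongr
          _ = |((kk - q:ℤ):ℝ)/q| := by
              rw [abs_div, abs_of_pos hqr]
              congr 1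
              rw [abs_of_nonpos (by exact_mod_cast (by omega : kk - (q:ℤ) ≤ 0))]
              push_cast; ring
          _ ≤ distInt (((kk - q:ℤ):ℝ)/q) := h4
    have h6 : distInt ((kk:ℝ)/q) - |γ + (m:ℝ)*ε| ≤ distInt ((m:ℝ)*θ + β) := by
      have hX : ((m*a+b : ℤ):ℝ)/q + (γ + (m:ℝ)*ε)
          = ((kk:ℝ)/q + (γ + (m:ℝ)*ε)) + (dd:ℝ) := by
        rw [hsplitint]; ring
      rw [hdist m, hX, distInt_add_int]
      have hlip := distInt_lipschitz ((kk:ℝ)/q) ((kk:ℝ)/q + (γ + (m:ℝ)*ε))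
      have he : |(kk:ℝ)/q - ((kk:ℝ)/q + (γ + (m:ℝ)*ε))| = |γ + (m:ℝ)*ε| := by
        rw [show (kk:ℝ)/q - ((kk:ℝ)/q + (γ + (m:ℝ)*ε)) = -(γ + (m:ℝ)*ε) by ring, abs_neg]
      rw [he] at hlip
      linarith
    have h7 : |γ + (m:ℝ)*ε| ≤ 3/(2*q) := by
      have h8 : |(m:ℝ)| ≤ (N:ℝ) := by
        rw [abs_le]
        constructor
        · exact_mod_cast hm1
        · exact_mod_cast hm2
      have h9 : |(m:ℝ)*ε| ≤ (N:ℝ)*|ε| := by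
        rw [abs_mul]
        apply mul_le_mul_of_nonneg_right h8 (abs_nonneg _)
      have h10 := abs_add_le γ ((m:ℝ)*ε)
      have h11 : (1:ℝ)/(2*q) + 1/q = 3/(2*q) := by ring
      have h12 : (N:ℝ)*|ε| ≤ 1/q := le_of_lt hDsmall
      linarith
    linarith
  -- tail / near split
  set T : ℤ → Prop := fun m => 2 ≤ key m ∧ key m ≤ (q:ℤ) - 2 with hT
  set I : Finset ℤ := Finset.Icc (-(N:ℤ)) (N:ℤ) with hI
  rw [← Finset.sum_filter_add_sum_filter_not I T ψ]
  set μr : ℤ → ℝ := fun kk => ((min kk ((q:ℤ) - kk) : ℤ):ℝ) with hμr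
  -- pointwise tail bound
  have htailpt : ∀ m ∈ I.filter (fun m => T m), ψ m ≤ 16*(q:ℝ)^2 * ((μr (key m))⁻¹)^2 := by
    intro m hm
    obtain ⟨hmI, hmT⟩ := Finset.mem_filter.1 hm
    obtain ⟨hmI1, hmI2⟩ := Finset.mem_Icc.1 hmI
    have hμ2 : (2:ℝ) ≤ μr (key m) := by
      simp only [hμr]
      exact_mod_cast (by omega : (2:ℤ) ≤ min (key m) ((q:ℤ) - key m))
    have hμpos : (0:ℝ) < μr (key m) := by linarith
    have hlow := hlowkey m hmI1 hmI2
    have hlow2 : μr (key m)/(4*q) ≤ distInt ((m:ℝ)*θ + β) := by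
      have harith : μr (key m)/q - 3/(2*q) - μr (key m)/(4*q)
          = (3*μr (key m) - 6)/(4*q) := by ring
      have hge : (0:ℝ) ≤ (3*μr (key m) - 6)/(4*q) := by
        apply div_nonneg _ (by positivity)
        linarith
      have := hlowkey m hmI1 hmI2
      rw [hμr]
      rw [hμr] at harith hge
      linarith
    have hmax : μr (key m)/(4*q) ≤ max (distInt ((m:ℝ)*θ + β)) ((N:ℝ)⁻¹) :=
      le_trans hlow2 (le_max_left _ _)
    have hpos : (0:ℝ) < μr (key m)/(4*q) := by positivity
    have hinv : (max (distInt ((m:ℝ)*θ + β)) ((N:ℝ)⁻¹))⁻¹ ≤ (μr (key m)/(4*q))⁻¹ :=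
      inv_anti₀ hpos hmax
    have hinvnn : (0:ℝ) ≤ (max (distInt ((m:ℝ)*θ + β)) ((N:ℝ)⁻¹))⁻¹ := by
      have : (0:ℝ) < max (distInt ((m:ℝ)*θ + β)) ((N:ℝ)⁻¹) :=
        lt_of_lt_of_le (by positivity) (le_max_right _ _)
      positivity
    have hsq := pow_le_pow_left₀ hinvnn hinv 2
    have hrw : ((μr (key m)/(4*q))⁻¹)^2 = 16*(q:ℝ)^2 * ((μr (key m))⁻¹)^2 := by
      rw [inv_div, div_pow, div_eq_mul_inv, ← inv_pow]
      ring
    rw [hψ]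
    calc (max (distInt ((m:ℝ)*θ + β)) ((N:ℝ)⁻¹))⁻¹ ^ 2 ≤ ((μr (key m)/(4*q))⁻¹)^2 := hsq
      _ = 16*(q:ℝ)^2 * ((μr (key m))⁻¹)^2 := hrw
  -- tail sum bound
  have htailsum : ∑ m ∈ I.filter (fun m => T m), ψ m ≤ 192*(N:ℝ)*q := by
    have hmapT : ∀ m ∈ I.filter (fun m => T m), key m ∈ Finset.Icc (2:ℤ) ((q:ℤ)-2) := by
      intro m hm
      obtain ⟨_, hmT⟩ := Finset.mem_filter.1 hm
      exact Finset.mem_Icc.2 hmT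
    rw [← Finset.sum_fiberwise_of_maps_to hmapT ψ]
    have hinner : ∀ kk ∈ Finset.Icc (2:ℤ) ((q:ℤ)-2),
        ∑ m ∈ (I.filter (fun m => T m)).filter (fun m => key m = kk), ψ m
          ≤ 96*(N:ℝ)*q * ((μr kk)⁻¹)^2 := by
      intro kk hkk
      obtain ⟨hkk1, hkk2⟩ := Finset.mem_Icc.1 hkk
      set Sk := (I.filter (fun m => T m)).filter (fun m => key m = kk) with hSk
      have hsub : Sk ⊆ Finset.Icc (-(N:ℤ)) (N:ℤ) := by
        intro m hm
        exact Finset.filter_subset _ _ (Finset.filter_subset _ _ hm)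
      have hdvd : ∀ m ∈ Sk, ∀ m' ∈ Sk, (q:ℤ) ∣ m' - m := by
        intro m hm m' hm'
        have h1 := (Finset.mem_filter.1 hm).2
        have h2 := (Finset.mem_filter.1 hm').2
        exact hcong m m' (h1.trans h2.symm)
      have hcard := card_fiber_le N q hq1 hqN Sk hsub hdvd
      have hμ2 : (2:ℝ) ≤ μr kk := by
        simp only [hμr]
        exact_mod_cast (by omega : (2:ℤ) ≤ min kk ((q:ℤ) - kk))
      have hbd : ∀ m ∈ Sk, ψ m ≤ 16*(q:ℝ)^2 * ((μr kk)⁻¹)^2 := by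
        intro m hm
        have h1 := (Finset.mem_filter.1 hm).2
        have h2 := htailpt m (Finset.mem_filter.1 hm).1
        rw [h1] at h2
        exact h2
      calc ∑ m ∈ Sk, ψ m ≤ Sk.card • (16*(q:ℝ)^2 * ((μr kk)⁻¹)^2) :=
            Finset.sum_le_card_nsmul _ _ _ hbd
        _ = (Sk.card : ℝ) * (16*(q:ℝ)^2 * ((μr kk)⁻¹)^2) := by rw [nsmul_eq_mul]
        _ ≤ (6*(N:ℝ)/q) * (16*(q:ℝ)^2 * ((μr kk)⁻¹)^2) := by
            apply mul_le_mul_of_nonneg_right hcard (by positivity)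
        _ = 96*(N:ℝ)*q * ((μr kk)⁻¹)^2 := by
            field_simp
            ring
    have hsum2 : ∑ kk ∈ Finset.Icc (2:ℤ) ((q:ℤ)-2), ((μr kk)⁻¹)^2 ≤ 2 := by
      have hpt : ∀ kk ∈ Finset.Icc (2:ℤ) ((q:ℤ)-2),
          ((μr kk)⁻¹)^2 ≤ ((kk:ℝ)⁻¹)^2 + (((q - kk : ℤ):ℝ)⁻¹)^2 := by
        intro kk hkk
        obtain ⟨h1, h2⟩ := Finset.mem_Icc.1 hkk
        rcases min_cases kk ((q:ℤ) - kk) with ⟨he, _⟩ | ⟨he, _⟩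
        · have h0 : μr kk = (kk:ℝ) := by simp only [hμr, he]
          rw [h0]
          have hnn : (0:ℝ) ≤ (((q - kk : ℤ):ℝ)⁻¹)^2 := by positivity
          linarith
        · have h0 : μr kk = ((q - kk : ℤ):ℝ) := by simp only [hμr, he]
          rw [h0]
          have hnn : (0:ℝ) ≤ ((kk:ℝ)⁻¹)^2 := by positivity
          linarith
      have hb1 : ∑ kk ∈ Finset.Icc (2:ℤ) ((q:ℤ)-2), ((kk:ℝ)⁻¹)^2 ≤ 1 :=
        basel_sum _ (fun k hk => (Finset.mem_Icc.1 hk).1)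
      have hb2 : ∑ kk ∈ Finset.Icc (2:ℤ) ((q:ℤ)-2), (((q - kk : ℤ):ℝ)⁻¹)^2 ≤ 1 := by
        have hsum := Finset.sum_image (s := Finset.Icc (2:ℤ) ((q:ℤ)-2))
          (g := fun kk => (q:ℤ) - kk) (f := fun k : ℤ => ((k:ℝ)⁻¹)^2)
          (fun x _ y _ hxy => by simp only at hxy; omega)
        have hbs : ∑ k ∈ (Finset.Icc (2:ℤ) ((q:ℤ)-2)).image (fun kk => (q:ℤ) - kk),
            ((k:ℝ)⁻¹)^2 ≤ 1 := by
          apply basel_sum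
          intro k hk
          obtain ⟨kk, hkk, rfl⟩ := Finset.mem_image.1 hk
          have := (Finset.mem_Icc.1 hkk).2
          omega
        calc ∑ kk ∈ Finset.Icc (2:ℤ) ((q:ℤ)-2), (((q - kk : ℤ):ℝ)⁻¹)^2
            = ∑ k ∈ (Finset.Icc (2:ℤ) ((q:ℤ)-2)).image (fun kk => (q:ℤ) - kk),
              ((k:ℝ)⁻¹)^2 := hsum.symm
          _ ≤ 1 := hbs
      calc ∑ kk ∈ Finset.Icc (2:ℤ) ((q:ℤ)-2), ((μr kk)⁻¹)^2
          ≤ ∑ kk ∈ Finset.Icc (2:ℤ) ((q:ℤ)-2), (((kk:ℝ)⁻¹)^2 + (((q - kk : ℤ):ℝ)⁻¹)^2) :=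
            Finset.sum_le_sum hpt
        _ = (∑ kk ∈ Finset.Icc (2:ℤ) ((q:ℤ)-2), ((kk:ℝ)⁻¹)^2)
            + ∑ kk ∈ Finset.Icc (2:ℤ) ((q:ℤ)-2), (((q - kk : ℤ):ℝ)⁻¹)^2 :=
            Finset.sum_add_distrib
        _ ≤ 2 := by linarith
    calc ∑ kk ∈ Finset.Icc (2:ℤ) ((q:ℤ)-2),
          ∑ m ∈ (I.filter (fun m => T m)).filter (fun m => key m = kk), ψ m
        ≤ ∑ kk ∈ Finset.Icc (2:ℤ) ((q:ℤ)-2), 96*(N:ℝ)*q * ((μr kk)⁻¹)^2 :=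
          Finset.sum_le_sum hinner
      _ = 96*(N:ℝ)*q * ∑ kk ∈ Finset.Icc (2:ℤ) ((q:ℤ)-2), ((μr kk)⁻¹)^2 := by
          rw [Finset.mul_sum]
      _ ≤ 96*(N:ℝ)*q * 2 := by
          apply mul_le_mul_of_nonneg_left hsum2 (by positivity)
      _ = 192*(N:ℝ)*q := by ring
  -- near sum bounds
  set NK : Finset ℤ := {0, 1, (q:ℤ)-1} with hNK
  have hmapN : ∀ m ∈ I.filter (fun m => ¬ T m), key m ∈ NK := by
    intro m hm
    obtain ⟨_, hmT⟩ := Finset.mem_filter.1 hm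
    rw [hT] at hmT
    push_neg at hmT
    have h1 := hkey0 m
    have h2 := hkeyq m
    rw [hNK]
    simp only [Finset.mem_insert, Finset.mem_singleton]
    omega
  have hNKcard : (NK.card : ℝ) ≤ 3 := by
    have h1 : NK.card ≤ 3 := by
      rw [hNK]
      apply le_trans (Finset.card_insert_le _ _)
      have := Finset.card_insert_le (1:ℤ) ({(q:ℤ)-1} : Finset ℤ)
      simp at this ⊢
      omega
    exact_mod_cast h1
  have hfibprops : ∀ kk : ℤ,
      ((I.filter (fun m => ¬ T m)).filter (fun m => key m = kk) ⊆ Finset.Icc (-(N:ℤ)) (N:ℤ))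
      ∧ (∀ m ∈ (I.filter (fun m => ¬ T m)).filter (fun m => key m = kk),
          ∀ m' ∈ (I.filter (fun m => ¬ T m)).filter (fun m => key m = kk), (q:ℤ) ∣ m' - m) := by
    intro kk
    constructor
    · intro m hm
      exact Finset.filter_subset _ _ (Finset.filter_subset _ _ hm)
    · intro m hm m' hm'
      have h1 := (Finset.mem_filter.1 hm).2
      have h2 := (Finset.mem_filter.1 hm').2
      exact hcong m m' (h1.trans h2.symm)
  have hnearsplit : ∑ m ∈ I.filter (fun m => ¬ T m), ψ m =
      ∑ kk ∈ NK, ∑ m ∈ (I.filter (fun m => ¬ T m)).filter (fun m => key m = kk), ψ m :=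
    (Finset.sum_fiberwise_of_maps_to hmapN ψ).symm
  -- near bound (a): always
  have hnearA : ∑ m ∈ I.filter (fun m => ¬ T m), ψ m ≤ 18*((N:ℝ)^3/q) := by
    rw [hnearsplit]
    have hinner : ∀ kk ∈ NK,
        ∑ m ∈ (I.filter (fun m => ¬ T m)).filter (fun m => key m = kk), ψ m
          ≤ 6*((N:ℝ)^3/q) := by
      intro kk _
      obtain ⟨hsub, hdvd⟩ := hfibprops kk
      have hcard := card_fiber_le N q hq1 hqN _ hsub hdvd
      calc ∑ m ∈ (I.filter (fun m => ¬ T m)).filter (fun m => key m = kk), ψ m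
          ≤ ((I.filter (fun m => ¬ T m)).filter (fun m => key m = kk)).card • ((N:ℝ)^2) :=
            Finset.sum_le_card_nsmul _ _ _ (fun m _ => hψleN m)
        _ = (((I.filter (fun m => ¬ T m)).filter (fun m => key m = kk)).card : ℝ) * (N:ℝ)^2 := by
            rw [nsmul_eq_mul]
        _ ≤ (6*(N:ℝ)/q) * (N:ℝ)^2 := by
            apply mul_le_mul_of_nonneg_right hcard (by positivity)
        _ = 6*((N:ℝ)^3/q) := by ring
    calc ∑ kk ∈ NK, ∑ m ∈ (I.filter (fun m => ¬ T m)).filter (fun m => key m = kk), ψ m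
        ≤ ∑ kk ∈ NK, 6*((N:ℝ)^3/q) := Finset.sum_le_sum hinner
      _ = (NK.card : ℝ) * (6*((N:ℝ)^3/q)) := by rw [Finset.sum_const, nsmul_eq_mul]
      _ ≤ 3 * (6*((N:ℝ)^3/q)) := by
          apply mul_le_mul_of_nonneg_right hNKcard (by positivity)
      _ = 18*((N:ℝ)^3/q) := by ring
  -- near bound (b): when ε ≠ 0
  have hnearB : ε ≠ 0 → ∑ m ∈ I.filter (fun m => ¬ T m), ψ m
      ≤ 63*(N:ℝ)^2 + 84*(N:ℝ)/((q:ℝ)*|ε|) := by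
    intro hε0
    rw [hnearsplit]
    have hqθeq : (q:ℝ)*θ = ((a + q*S₀ : ℤ):ℝ) + (q:ℝ)*ε := by
      rw [hθ]
      push_cast
      field_simp
      ring
    have hεsmall : (N:ℝ)*|ε| ≤ 1 := by
      have : (1:ℝ)/q ≤ 1 := by
        rw [div_le_one hqr]
        exact_mod_cast hq1
      linarith [hDsmall]
    have hinner : ∀ kk ∈ NK,
        ∑ m ∈ (I.filter (fun m => ¬ T m)).filter (fun m => key m = kk), ψ m
          ≤ 21*(N:ℝ)^2 + 28*(N:ℝ)/((q:ℝ)*|ε|) := by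
      intro kk _
      obtain ⟨hsub, hdvd⟩ := hfibprops kk
      exact near_fiber N q hN hq1 θ ε β (a + q*S₀) hqθeq hε0 hεsmall _ hsub hdvd
    calc ∑ kk ∈ NK, ∑ m ∈ (I.filter (fun m => ¬ T m)).filter (fun m => key m = kk), ψ m
        ≤ ∑ kk ∈ NK, (21*(N:ℝ)^2 + 28*(N:ℝ)/((q:ℝ)*|ε|)) := Finset.sum_le_sum hinner
      _ = (NK.card : ℝ) * (21*(N:ℝ)^2 + 28*(N:ℝ)/((q:ℝ)*|ε|)) := by
          rw [Finset.sum_const, nsmul_eq_mul]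
      _ ≤ 3 * (21*(N:ℝ)^2 + 28*(N:ℝ)/((q:ℝ)*|ε|)) := by
          apply mul_le_mul_of_nonneg_right hNKcard (by positivity)
      _ = 63*(N:ℝ)^2 + 84*(N:ℝ)/((q:ℝ)*|ε|) := by ring
  -- final assembly
  have hNq2 : (N:ℝ)*q ≤ (N:ℝ)^2 := by nlinarith
  have hN2q : (N:ℝ)^2 ≤ (N:ℝ)^3/q := by
    rw [le_div_iff₀ hqr]
    nlinarith
  by_cases hε0 : ε = 0
  · -- D = 0 case
    rw [hε0]
    simp only [abs_zero]
    rw [Real.zero_rpow (by norm_num : (1:ℝ)/2 ≠ 0)]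
    rw [mul_zero, add_zero, one_pow, mul_one]
    have hSig : ∑ m ∈ I.filter (fun m => T m), ψ m + ∑ m ∈ I.filter (fun m => ¬ T m), ψ m
        ≤ 210*((N:ℝ)^3/q) := by
      have h1 : 192*(N:ℝ)*q ≤ 192*((N:ℝ)^3/q) := by
        calc 192*(N:ℝ)*q ≤ 192*(N:ℝ)^2 := by linarith
          _ ≤ 192*((N:ℝ)^3/q) := by linarith
      have := hnearA
      linarith [htailsum]
    rw [le_div_iff₀ hqr]
    apply le_trans (mul_le_mul_of_nonneg_right hSig hqr.le)
    have e : 210*((N:ℝ)^3/q)*q = 210*(N:ℝ)^3 := by field_simp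
    rw [e]
    nlinarith
  · -- ε ≠ 0
    set s : ℝ := |ε| ^ ((1:ℝ)/2) with hs
    have hs0 : 0 ≤ s := Real.rpow_nonneg hD0 _
    have hs2 : s^2 = |ε| := by
      rw [hs, ← Real.rpow_natCast (|ε| ^ ((1:ℝ)/2)) 2, ← Real.rpow_mul hD0]
      norm_num
    have hdenpos : (0:ℝ) < (q:ℝ) * (1 + (N:ℝ)*s)^2 := by
      have : (0:ℝ) < 1 + (N:ℝ)*s := by positivity
      positivity
    rw [le_div_iff₀ hdenpos]
    have hSignn : 0 ≤ ∑ m ∈ I.filter (fun m => T m), ψ m + ∑ m ∈ I.filter (fun m => ¬ T m), ψ m := by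
      apply add_nonneg <;> exact Finset.sum_nonneg (fun m _ => hψnn m)
    by_cases hc : (N:ℝ)^2 * |ε| ≤ 1
    · -- small D
      have hNs1 : (N:ℝ)*s ≤ 1 := by nlinarith [sq_nonneg ((N:ℝ)*s - 1), sq_nonneg ((N:ℝ)*s)]
      have hP4 : (1 + (N:ℝ)*s)^2 ≤ 4 := by nlinarith
      have hSig : ∑ m ∈ I.filter (fun m => T m), ψ m + ∑ m ∈ I.filter (fun m => ¬ T m), ψ m
          ≤ 210*((N:ℝ)^3/q) := by
        have h1 : 192*(N:ℝ)*q ≤ 192*((N:ℝ)^3/q) := by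
          calc 192*(N:ℝ)*q ≤ 192*(N:ℝ)^2 := by linarith
            _ ≤ 192*((N:ℝ)^3/q) := by linarith
        linarith [htailsum, hnearA]
      calc (∑ m ∈ I.filter (fun m => T m), ψ m + ∑ m ∈ I.filter (fun m => ¬ T m), ψ m)
            * ((q:ℝ) * (1 + (N:ℝ)*s)^2)
          ≤ (210*((N:ℝ)^3/q)) * ((q:ℝ) * 4) := by
            apply mul_le_mul hSig _ (by positivity) (by positivity)
            apply mul_le_mul_of_nonneg_left hP4 (le_of_lt hqr)
        _ = 840*(N:ℝ)^3 := by field_simp; ring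
        _ ≤ 2000*(N:ℝ)^3 := by nlinarith
    · -- large D
      push_neg at hc
      have hqεnn : 0 < (q:ℝ)*|ε| := by
        apply mul_pos hqr (abs_pos.2 hε0)
      have hP : (1 + (N:ℝ)*s)^2 ≤ 4*(N:ℝ)^2*|ε| := by
        have h1 : ((N:ℝ)*s)^2 = (N:ℝ)^2*|ε| := by rw [mul_pow, hs2]
        nlinarith [sq_nonneg (1 - (N:ℝ)*s)]
      have hSig : ∑ m ∈ I.filter (fun m => T m), ψ m + ∑ m ∈ I.filter (fun m => ¬ T m), ψ m
          ≤ 255*(N:ℝ)^2 + 84*(N:ℝ)/((q:ℝ)*|ε|) := by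
        have h1 : 192*(N:ℝ)*q ≤ 192*(N:ℝ)^2 := by linarith
        linarith [htailsum, hnearB hε0]
      have hqd : (q:ℝ)*|ε| * (N:ℝ) ≤ 1 := by
        have h1 := mul_lt_mul_of_pos_right hqε hNr
        have h2 : (1/(N:ℝ))*N = 1 := by field_simp
        linarith
      calc (∑ m ∈ I.filter (fun m => T m), ψ m + ∑ m ∈ I.filter (fun m => ¬ T m), ψ m)
            * ((q:ℝ) * (1 + (N:ℝ)*s)^2)
          ≤ (255*(N:ℝ)^2 + 84*(N:ℝ)/((q:ℝ)*|ε|)) * ((q:ℝ) * (4*(N:ℝ)^2*|ε|)) := by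
            apply mul_le_mul hSig _ (by positivity) (by positivity)
            apply mul_le_mul_of_nonneg_left hP (le_of_lt hqr)
        _ = 1020*(N:ℝ)^3 * ((q:ℝ)*|ε| * (N:ℝ)) + 336*(N:ℝ)^3 := by
            field_simp
            ring
        _ ≤ 1020*(N:ℝ)^3 * 1 + 336*(N:ℝ)^3 := by
            apply add_le_add_left
            apply mul_le_mul_of_nonneg_left hqd (by positivity)
        _ ≤ 2000*(N:ℝ)^3 := by nlinarith
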